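/- (Population minimizer of the reweighted logistic loss uses only the core feature.) In the underparameterized setting (N = 0), for any p_maj ∈ (0,1), σ_core > 0, σ_spu ≥ 0, the population reweighted logistic loss L_rw(w) = E[ℓ_rw(x, y, w)] has vanishing gradient at w* = (2/σ_core², 0): both partial derivatives ∂L_rw/∂w_core and ∂L_rw/∂w_spu are zero at w*. -/

import Mathlib

open MeasureTheory ProbabilityTheory Real
open scoped ENNReal NNReal Classical

noncomputable section

/-- A sample in the underparameterized (N = 0) setting: `((x_core, x_spu), y, a)`. -/
abbrev Samp : Type := (ℝ × ℝ) × ℝ × ℝ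

/-- Distribution of a sample from the group with label `y` and spurious attribute `a`:
`x_core ∼ N(y, σ_core²)`, `x_spu ∼ N(a, σ_spu²)`, independent. -/
def grpMeasure (vCore vSpu : ℝ≥0) (y a : ℝ) : Measure Samp :=
  ((gaussianReal y vCore).prod (gaussianReal a vSpu)).prod
    ((Measure.dirac y).prod (Measure.dirac a))

/-- Joint distribution of `((x_core, x_spu), y, a)`: `y` is uniform on `{−1,1}`, `a = y`
with probability `p_maj` and `a = −y` otherwise, and `x | (y,a)` is group-Gaussian. -/
def jointMeasure (pmaj : ℝ) (vCore vSpu : ℝ≥0) : Measure Samp :=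
  ENNReal.ofReal (pmaj / 2) • grpMeasure vCore vSpu 1 1 +
  ENNReal.ofReal (pmaj / 2) • grpMeasure vCore vSpu (-1) (-1) +
  ENNReal.ofReal ((1 - pmaj) / 2) • grpMeasure vCore vSpu 1 (-1) +
  ENNReal.ofReal ((1 - pmaj) / 2) • grpMeasure vCore vSpu (-1) 1

/-- The reweighted logistic loss: `1/p_maj · log(1+exp(−y w·x))` on majority samples
(`a = y`) and `1/(1−p_maj) · log(1+exp(−y w·x))` on minority samples (`a = −y`). -/
def lossRW (pmaj : ℝ) (w : ℝ × ℝ) (ω : Samp) : ℝ :=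
  (if ω.2.2 = ω.2.1 then 1 / pmaj else 1 / (1 - pmaj)) *
    Real.log (1 + Real.exp (- ω.2.1 * (w.1 * ω.1.1 + w.2 * ω.1.2)))

/-- Test error of `w ∈ ℝ²` on the group `(y, a)`: probability that `y(w·x) ≤ 0` for a
fresh `x` from that group. -/
def errGroup2 (vCore vSpu : ℝ≥0) (w : ℝ × ℝ) (y a : ℝ) : ℝ :=
  (((gaussianReal y vCore).prod (gaussianReal a vSpu))
    {x : ℝ × ℝ | y * (w.1 * x.1 + w.2 * x.2) ≤ 0}).toReal

/-- Worst-group test error of `w ∈ ℝ²`: maximum of the group errors over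
`(y, a) ∈ {−1,1}²`. -/
def robErr2 (vCore vSpu : ℝ≥0) (w : ℝ × ℝ) : ℝ :=
  max (max (errGroup2 vCore vSpu w 1 1) (errGroup2 vCore vSpu w 1 (-1)))
      (max (errGroup2 vCore vSpu w (-1) 1) (errGroup2 vCore vSpu w (-1) (-1)))

end

/-- The population reweighted logistic loss `L_rw(w) = E[ℓ_rw(x, y, w)]`. -/
noncomputable def popLoss (pmaj : ℝ) (vCore vSpu : ℝ≥0) (w : ℝ × ℝ) : ℝ :=
  ∫ ω, lossRW pmaj w ω ∂(jointMeasure pmaj vCore vSpu)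

section PopAuxSection

set_option maxHeartbeats 1000000

open MeasureTheory ProbabilityTheory Real
open scoped ENNReal NNReal Classical

namespace PopAux


lemma LE_nonneg (u : ℝ) : 0 ≤ Real.log (1 + Real.exp u) := by
  apply Real.log_nonneg
  nlinarith [Real.exp_pos u]

lemma LE_le (u : ℝ) : Real.log (1 + Real.exp u) ≤ Real.log 2 + |u| := by
  have h1 : (1 : ℝ) + Real.exp u ≤ 2 * Real.exp |u| := by
    have h2 : Real.exp u ≤ Real.exp |u| := Real.exp_le_exp.2 (le_abs_self u)
    have h3 : (1:ℝ) ≤ Real.exp |u| := Real.one_le_exp (abs_nonneg u)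
    linarith
  calc Real.log (1 + Real.exp u) ≤ Real.log (2 * Real.exp |u|) := by
        apply Real.log_le_log (by positivity) h1
    _ = Real.log 2 + |u| := by rw [Real.log_mul (by norm_num) (Real.exp_pos _).ne', Real.log_exp]

lemma hasDerivAt_LE (a b t : ℝ) :
    HasDerivAt (fun t => Real.log (1 + Real.exp (a * t + b)))
      (a * Real.exp (a * t + b) / (1 + Real.exp (a * t + b))) t := by
  have h1 : HasDerivAt (fun t : ℝ => a * t + b) a t := by
    simpa using ((hasDerivAt_id t).const_mul a).add_const b
  have h2 := (Real.hasDerivAt_exp (a * t + b)).comp t h1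
  have h3 : HasDerivAt (fun t => 1 + Real.exp (a * t + b)) (Real.exp (a * t + b) * a) t :=
    h2.const_add 1
  have h4 : (0:ℝ) < 1 + Real.exp (a * t + b) := by positivity
  have := (Real.hasDerivAt_log h4.ne').comp t h3
  refine this.congr_deriv ?_
  ring

-- first absolute moment of a gaussian
lemma bound_integrable_aux {b : ℝ} (hb : 0 < b) (K m : ℝ) :
    Integrable (fun x : ℝ => K * ((|x - m| + |m|) * Real.exp (-b * (x - m) ^ 2))) volume := by
  have h1 : Integrable (fun u : ℝ => u * Real.exp (-b * u ^ 2)) volume := by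
    simpa using integrable_rpow_mul_exp_neg_mul_sq hb (s := 1) (by norm_num)
  have h1' : Integrable (fun u : ℝ => |u| * Real.exp (-b * u ^ 2)) volume := by
    refine h1.abs.congr (Filter.Eventually.of_forall fun u => ?_)
    simp [abs_mul, abs_of_pos (Real.exp_pos _)]
  have h2 : Integrable (fun u : ℝ => |m| * Real.exp (-b * u ^ 2)) volume :=
    (integrable_exp_neg_mul_sq hb).const_mul _
  have hI : Integrable (fun u : ℝ => K * ((|u| + |m|) * Real.exp (-b * u ^ 2))) volume := by
    refine ((h1'.add h2).const_mul K).congr (Filter.Eventually.of_forall fun u => ?_)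
    simp only [Pi.add_apply]
    ring
  have hmap : Measure.map (fun x : ℝ => x - m) volume = volume := by
    simpa [sub_eq_add_neg] using map_add_right_eq_self (volume : Measure ℝ) (-m)
  have hI' : Integrable (fun u : ℝ => K * ((|u| + |m|) * Real.exp (-b * u ^ 2)))
      (Measure.map (fun x : ℝ => x - m) volume) := by rw [hmap]; exact hI
  exact (integrable_map_measure (hmap.symm ▸ hI.1)
    (measurable_sub_const m).aemeasurable).mp hI'

lemma integrable_abs_gaussianReal (m : ℝ) (v : ℝ≥0) :
    Integrable (fun x => |x|) (gaussianReal m v) := by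
  by_cases hv : v = 0
  · subst hv
    rw [gaussianReal_zero_var]
    exact (integrable_const |m|).congr (ae_eq_dirac (fun x : ℝ => |x|)).symm
  · rw [gaussianReal_of_var_ne_zero m hv]
    have hmeq : gaussianPDF m v = fun x => ((gaussianPDFReal m v x).toNNReal : ℝ≥0∞) := rfl
    rw [hmeq, integrable_withDensity_iff_integrable_smul
      ((measurable_gaussianPDFReal m v).real_toNNReal)]
    have hv0 : (0:ℝ) < (v:ℝ) := lt_of_le_of_ne v.2 (by exact_mod_cast (Ne.symm hv))
    have hb : (0:ℝ) < (2 * (v:ℝ))⁻¹ := by positivity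
    have heq : (fun x : ℝ => (gaussianPDFReal m v x).toNNReal • |x|)
        = fun x => gaussianPDFReal m v x * |x| := by
      funext x
      rw [NNReal.smul_def, Real.coe_toNNReal _ (gaussianPDFReal_nonneg m v x), smul_eq_mul]
    rw [heq]
    refine (bound_integrable_aux hb ((Real.sqrt (2 * Real.pi * (v:ℝ)))⁻¹) m).mono' ?_
      (Filter.Eventually.of_forall fun x => ?_)
    · exact ((measurable_gaussianPDFReal m v).mul measurable_abs).aestronglyMeasurable
    · have hval : gaussianPDFReal m v x
          = (Real.sqrt (2 * Real.pi * (v:ℝ)))⁻¹ * Real.exp (-(2 * (v:ℝ))⁻¹ * (x - m) ^ 2) := by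
        have harg : -(2 * (v:ℝ))⁻¹ * (x - m) ^ 2 = -(x - m) ^ 2 / (2 * (v:ℝ)) := by ring
        rw [harg]
        rfl
      rw [Real.norm_eq_abs, abs_mul, abs_abs,
        abs_of_nonneg (gaussianPDFReal_nonneg m v x), hval]
      have hx : |x| ≤ |x - m| + |m| := by
        calc |x| = |(x - m) + m| := by ring_nf
          _ ≤ |x - m| + |m| := abs_add_le _ _
      have hK0 : (0:ℝ) ≤ (Real.sqrt (2 * Real.pi * (v:ℝ)))⁻¹ := by positivity
      calc (Real.sqrt (2 * Real.pi * (v:ℝ)))⁻¹ * Real.exp (-(2 * (v:ℝ))⁻¹ * (x - m) ^ 2) * |x|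
          ≤ (Real.sqrt (2 * Real.pi * (v:ℝ)))⁻¹ * Real.exp (-(2 * (v:ℝ))⁻¹ * (x - m) ^ 2)
            * (|x - m| + |m|) :=
            mul_le_mul_of_nonneg_left hx (by positivity)
        _ = (Real.sqrt (2 * Real.pi * (v:ℝ)))⁻¹
            * ((|x - m| + |m|) * Real.exp (-(2 * (v:ℝ))⁻¹ * (x - m) ^ 2)) := by ring

/-- Differentiation under the integral sign for the logistic-loss-type integrand. -/
lemma hasDerivAt_integral_logexp {α : Type*} [MeasurableSpace α] (μ : Measure α)
    [IsProbabilityMeasure μ] {A B : α → ℝ} (hA : Integrable A μ) (hB : Integrable B μ)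
    (hAm : Measurable A) (hBm : Measurable B) (t₀ : ℝ) :
    HasDerivAt (fun t => ∫ ω, Real.log (1 + Real.exp (A ω * t + B ω)) ∂μ)
      (∫ ω, A ω * Real.exp (A ω * t₀ + B ω) / (1 + Real.exp (A ω * t₀ + B ω)) ∂μ) t₀ := by
  have hmeas : ∀ t : ℝ, AEStronglyMeasurable (fun ω => Real.log (1 + Real.exp (A ω * t + B ω))) μ :=
    fun t => ((((hAm.mul_const t).add hBm).exp.const_add 1).log).aestronglyMeasurable
  have h := hasDerivAt_integral_of_dominated_loc_of_deriv_le (s := Metric.ball t₀ 1) (μ := μ)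
    (F := fun t ω => Real.log (1 + Real.exp (A ω * t + B ω)))
    (F' := fun t ω => A ω * Real.exp (A ω * t + B ω) / (1 + Real.exp (A ω * t + B ω)))
    (x₀ := t₀) (bound := fun ω => |A ω|)
    (Metric.ball_mem_nhds t₀ one_pos) (Filter.Eventually.of_forall hmeas) ?_ ?_ ?_ hA.abs ?_
  · exact h.2
  · -- Integrable (F t₀)
    refine ((integrable_const (Real.log 2)).add ((hA.abs.const_mul |t₀|).add hB.abs)).mono'
      (hmeas t₀) (Filter.Eventually.of_forall fun ω => ?_)
    rw [Real.norm_eq_abs, abs_of_nonneg (LE_nonneg _)]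
    calc Real.log (1 + Real.exp (A ω * t₀ + B ω)) ≤ Real.log 2 + |A ω * t₀ + B ω| := LE_le _
      _ ≤ Real.log 2 + (|t₀| * |A ω| + |B ω|) := by
          have := abs_add_le (A ω * t₀) (B ω)
          rw [abs_mul] at this
          linarith [this, mul_comm |A ω| |t₀|]
      _ = Real.log 2 + (|t₀| * |A ω| + |B ω|) := rfl
  · exact ((hAm.mul (((hAm.mul_const t₀).add hBm).exp)).div
      (((hAm.mul_const t₀).add hBm).exp.const_add 1)).aestronglyMeasurable
  · refine Filter.Eventually.of_forall fun ω t _ => ?_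
    have he : (0:ℝ) < Real.exp (A ω * t + B ω) := Real.exp_pos _
    have hfrac0 : (0:ℝ) ≤ Real.exp (A ω * t + B ω) / (1 + Real.exp (A ω * t + B ω)) := by
      positivity
    have hfrac1 : Real.exp (A ω * t + B ω) / (1 + Real.exp (A ω * t + B ω)) ≤ 1 := by
      rw [div_le_one (by positivity)]; linarith
    show ‖A ω * Real.exp (A ω * t + B ω) / (1 + Real.exp (A ω * t + B ω))‖ ≤ |A ω|
    rw [Real.norm_eq_abs, mul_div_assoc, abs_mul, abs_of_nonneg hfrac0]
    exact mul_le_of_le_one_right (abs_nonneg _) hfrac1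
  · exact Filter.Eventually.of_forall fun ω t _ => hasDerivAt_LE (A ω) (B ω) t

lemma logistic_refl (s x : ℝ) :
    x * Real.exp (-s) / (1 + Real.exp (-s)) = x / (1 + Real.exp s) := by
  rw [Real.exp_neg]
  have h : (0:ℝ) < Real.exp s := Real.exp_pos s
  rw [div_eq_div_iff (by positivity) (by positivity)]
  field_simp
  ring

lemma pdf_neg (v : ℝ≥0) (hv : (v:ℝ) ≠ 0) (x : ℝ) :
    gaussianPDFReal 1 v (-x) = gaussianPDFReal 1 v x * Real.exp (-(2 / (v:ℝ)) * x) := by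
  simp only [gaussianPDFReal_def]
  conv_rhs => rw [mul_assoc, ← Real.exp_add]
  congr 1
  field_simp
  ring

/-- The key stationarity computation: the gradient integrand is odd. -/
lemma core_integral_zero (v : ℝ≥0) (hv : v ≠ 0) :
    ∫ u, (-u) * Real.exp (-u * (2 / (v:ℝ)) + 0) / (1 + Real.exp (-u * (2 / (v:ℝ)) + 0))
      ∂(gaussianReal 1 v) = 0 := by
  have hvR : (v:ℝ) ≠ 0 := by exact_mod_cast hv
  set c : ℝ := 2 / (v:ℝ) with hc
  set F : ℝ → ℝ := fun u => (-u) * Real.exp (-u * c + 0) / (1 + Real.exp (-u * c + 0)) with hF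
  have hFm : Measurable F := by
    apply Measurable.div
    · exact measurable_neg.mul (((measurable_neg.mul_const c).add_const 0).exp)
    · exact (((measurable_neg.mul_const c).add_const 0).exp).const_add 1
  have hred : ∫ u, F u ∂(gaussianReal 1 v) = ∫ x, gaussianPDFReal 1 v x * F x ∂volume := by
    rw [gaussianReal_of_var_ne_zero 1 hv,
      show gaussianPDF 1 v = fun x => ((gaussianPDFReal 1 v x).toNNReal : ℝ≥0∞) from rfl,
      integral_withDensity_eq_integral_smul ((measurable_gaussianPDFReal 1 v).real_toNNReal)]
    congr 1
    funext x
    rw [NNReal.smul_def, Real.coe_toNNReal _ (gaussianPDFReal_nonneg 1 v x), smul_eq_mul]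
  set q : ℝ → ℝ := fun x => gaussianPDFReal 1 v x * F x with hq
  have hqm : Measurable q := (measurable_gaussianPDFReal 1 v).mul hFm
  have hodd : ∀ x, q (-x) = - q x := by
    intro x
    have hE : (0:ℝ) < Real.exp (x * c) := Real.exp_pos _
    have key : ∀ p E : ℝ, 0 < E →
        p * E⁻¹ * (x * E / (1 + E)) = -(p * (-x * E⁻¹ / (1 + E⁻¹))) := by
      intro p E hE
      have h1 : (0:ℝ) < 1 + E := by linarith
      have h2 : (0:ℝ) < 1 + E⁻¹ := by positivity
      field_simp
      ring
    have hexp1 : Real.exp (-c * x) = (Real.exp (x * c))⁻¹ := by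
      rw [← Real.exp_neg]; ring_nf
    have hexp2 : Real.exp (-x * c) = (Real.exp (x * c))⁻¹ := by
      rw [← Real.exp_neg]; ring_nf
    have h1 : q (-x) = gaussianPDFReal 1 v x * (Real.exp (x * c))⁻¹
        * (x * Real.exp (x * c) / (1 + Real.exp (x * c))) := by
      show gaussianPDFReal 1 v (-x) * F (-x) = _
      have hFx : F (-x) = x * Real.exp (x * c) / (1 + Real.exp (x * c)) := by
        rw [hF]; simp only [neg_neg, add_zero]
      rw [hFx, pdf_neg v hvR x, ← hc, hexp1]
    have h2 : q x = gaussianPDFReal 1 v x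
        * (-x * (Real.exp (x * c))⁻¹ / (1 + (Real.exp (x * c))⁻¹)) := by
      show gaussianPDFReal 1 v x * F x = _
      rw [hF]
      simp only [add_zero]
      rw [hexp2]
    rw [h1, h2]
    exact key _ _ hE
  have hneg : ∫ x, q x ∂volume = ∫ x, q (-x) ∂volume := by
    have hm : AEStronglyMeasurable q (Measure.map Neg.neg (volume : Measure ℝ)) := by
      rw [Measure.map_neg_eq_self]; exact hqm.aestronglyMeasurable
    calc ∫ x, q x ∂volume = ∫ x, q x ∂(Measure.map Neg.neg (volume : Measure ℝ)) := by
          rw [Measure.map_neg_eq_self]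
      _ = ∫ x, q (-x) ∂volume := integral_map measurable_neg.aemeasurable hm
  have hzero : ∫ x, q x ∂volume = - ∫ x, q x ∂volume := by
    calc ∫ x, q x ∂volume = ∫ x, q (-x) ∂volume := hneg
      _ = ∫ x, -(q x) ∂volume := by rw [show (fun x => q (-x)) = fun x => -(q x) from funext hodd]
      _ = - ∫ x, q x ∂volume := integral_neg q
  have : ∫ x, q x ∂volume = 0 := by linarith
  rw [show (∫ u, (-u) * Real.exp (-u * c + 0) / (1 + Real.exp (-u * c + 0)) ∂(gaussianReal 1 v))
      = ∫ u, F u ∂(gaussianReal 1 v) from rfl, hred]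
  exact this

lemma integrable_id_gaussianReal (m : ℝ) (v : ℝ≥0) :
    Integrable (fun x : ℝ => x) (gaussianReal m v) := by
  refine (integrable_abs_gaussianReal m v).mono' measurable_id.aestronglyMeasurable
    (Filter.Eventually.of_forall fun x => ?_)
  simp

lemma integrable_comp_fst {μ ν : Measure ℝ} [IsProbabilityMeasure μ] [IsProbabilityMeasure ν]
    {f : ℝ → ℝ} (hf : Integrable f μ) : Integrable (fun p : ℝ × ℝ => f p.1) (μ.prod ν) := by
  have hmap : Measure.map Prod.fst (μ.prod ν) = μ := by
    rw [Measure.map_fst_prod, measure_univ, one_smul]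
  have hf' : Integrable f (Measure.map Prod.fst (μ.prod ν)) := by rwa [hmap]
  exact (integrable_map_measure hf'.1 measurable_fst.aemeasurable).mp hf'

lemma integrable_comp_snd {μ ν : Measure ℝ} [IsProbabilityMeasure μ] [IsProbabilityMeasure ν]
    {f : ℝ → ℝ} (hf : Integrable f ν) : Integrable (fun p : ℝ × ℝ => f p.2) (μ.prod ν) := by
  have hmap : Measure.map Prod.snd (μ.prod ν) = ν := by
    rw [Measure.map_snd_prod, measure_univ, one_smul]
  have hf' : Integrable f (Measure.map Prod.snd (μ.prod ν)) := by rwa [hmap]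
  exact (integrable_map_measure hf'.1 measurable_snd.aemeasurable).mp hf'

lemma integral_comp_fst {μ ν : Measure ℝ} [IsProbabilityMeasure μ] [IsProbabilityMeasure ν]
    {f : ℝ → ℝ} (hf : Measurable f) : ∫ p, f p.1 ∂(μ.prod ν) = ∫ x, f x ∂μ := by
  have hmap : Measure.map Prod.fst (μ.prod ν) = μ := by
    rw [Measure.map_fst_prod, measure_univ, one_smul]
  calc ∫ p : ℝ × ℝ, f p.1 ∂(μ.prod ν)
      = ∫ x, f x ∂(Measure.map Prod.fst (μ.prod ν)) :=
        (integral_map measurable_fst.aemeasurable hf.aestronglyMeasurable).symm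
    _ = ∫ x, f x ∂μ := by rw [hmap]

lemma measurable_logexp (y b1 b2 : ℝ) :
    Measurable (fun x : ℝ × ℝ => Real.log (1 + Real.exp (-y * (b1 * x.1 + b2 * x.2)))) := by
  apply Measurable.log
  apply Measurable.const_add
  apply Measurable.exp
  exact ((measurable_fst.const_mul b1).add (measurable_snd.const_mul b2)).const_mul (-y)

lemma integrable_logexp_prod (y b1 b2 m1 m2 : ℝ) (v1 v2 : ℝ≥0) :
    Integrable (fun x : ℝ × ℝ => Real.log (1 + Real.exp (-y * (b1 * x.1 + b2 * x.2))))
      ((gaussianReal m1 v1).prod (gaussianReal m2 v2)) := by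
  have hb : Integrable (fun x : ℝ × ℝ =>
      Real.log 2 + ((|y| * |b1|) * |x.1| + (|y| * |b2|) * |x.2|))
      ((gaussianReal m1 v1).prod (gaussianReal m2 v2)) := by
    refine (integrable_const (Real.log 2)).add ?_
    exact ((integrable_comp_fst (integrable_abs_gaussianReal m1 v1)).const_mul _).add
      ((integrable_comp_snd (integrable_abs_gaussianReal m2 v2)).const_mul _)
  refine hb.mono' (measurable_logexp y b1 b2).aestronglyMeasurable
    (Filter.Eventually.of_forall fun x => ?_)
  rw [Real.norm_eq_abs, abs_of_nonneg (LE_nonneg _)]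
  calc Real.log (1 + Real.exp (-y * (b1 * x.1 + b2 * x.2)))
      ≤ Real.log 2 + |(-y) * (b1 * x.1 + b2 * x.2)| := LE_le _
    _ ≤ Real.log 2 + ((|y| * |b1|) * |x.1| + (|y| * |b2|) * |x.2|) := by
        rw [abs_mul, abs_neg]
        have h := abs_add_le (b1 * x.1) (b2 * x.2)
        rw [abs_mul, abs_mul] at h
        have h2 : |y| * |b1 * x.1 + b2 * x.2| ≤ |y| * (|b1| * |x.1| + |b2| * |x.2|) :=
          mul_le_mul_of_nonneg_left h (abs_nonneg y)
        nlinarith [abs_nonneg y]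

lemma measurable_lossRW (pmaj : ℝ) (w : ℝ × ℝ) : Measurable (lossRW pmaj w) := by
  unfold lossRW
  apply Measurable.mul
  · exact Measurable.ite (measurableSet_eq_fun measurable_snd.snd measurable_snd.fst)
      measurable_const measurable_const
  · apply Measurable.log
    apply Measurable.const_add
    apply Measurable.exp
    exact (measurable_snd.fst.neg).mul
      ((measurable_fst.fst.const_mul w.1).add (measurable_fst.snd.const_mul w.2))

lemma grpMeasure_eq_map (vC vS : ℝ≥0) (y a : ℝ) :
    grpMeasure vC vS y a = Measure.map (fun x : ℝ × ℝ => (x, (y, a)))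
      ((gaussianReal y vC).prod (gaussianReal a vS)) := by
  rw [grpMeasure, Measure.dirac_prod_dirac, Measure.prod_dirac]

lemma integral_grp (vC vS : ℝ≥0) (y a : ℝ) {f : Samp → ℝ} (hf : Measurable f) :
    ∫ ω, f ω ∂(grpMeasure vC vS y a)
      = ∫ x, f (x, (y, a)) ∂((gaussianReal y vC).prod (gaussianReal a vS)) := by
  rw [grpMeasure_eq_map,
    integral_map measurable_prodMk_right.aemeasurable hf.aestronglyMeasurable]

lemma integrable_lossRW_grp (pmaj : ℝ) (w : ℝ × ℝ) (vC vS : ℝ≥0) (y a : ℝ) :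
    Integrable (lossRW pmaj w) (grpMeasure vC vS y a) := by
  rw [grpMeasure_eq_map]
  rw [integrable_map_measure (measurable_lossRW pmaj w).aestronglyMeasurable
    measurable_prodMk_right.aemeasurable]
  have : (lossRW pmaj w ∘ fun x : ℝ × ℝ => (x, (y, a)))
      = fun x : ℝ × ℝ => (if a = y then 1 / pmaj else 1 / (1 - pmaj)) *
        Real.log (1 + Real.exp (-y * (w.1 * x.1 + w.2 * x.2))) := rfl
  rw [this]
  exact (integrable_logexp_prod y w.1 w.2 y a vC vS).const_mul _

/-- The value of `J`. -/
noncomputable def J (vC vS : ℝ≥0) (w : ℝ × ℝ) (y a : ℝ) : ℝ :=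
  ∫ x : ℝ × ℝ, Real.log (1 + Real.exp (-y * (w.1 * x.1 + w.2 * x.2)))
    ∂((gaussianReal y vC).prod (gaussianReal a vS))

lemma integral_lossRW_grp (pmaj : ℝ) (w : ℝ × ℝ) (vC vS : ℝ≥0) (y a : ℝ) :
    ∫ ω, lossRW pmaj w ω ∂(grpMeasure vC vS y a)
      = (if a = y then 1 / pmaj else 1 / (1 - pmaj)) * J vC vS w y a := by
  rw [integral_grp vC vS y a (measurable_lossRW pmaj w)]
  have : ∀ x : ℝ × ℝ, lossRW pmaj w (x, (y, a))
      = (if a = y then 1 / pmaj else 1 / (1 - pmaj)) *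
        Real.log (1 + Real.exp (-y * (w.1 * x.1 + w.2 * x.2))) := fun x => rfl
  simp only [this]
  rw [integral_const_mul]
  rfl

lemma popLoss_eq (pmaj : ℝ) (hp0 : 0 < pmaj) (hp1 : pmaj < 1) (vC vS : ℝ≥0) (w : ℝ × ℝ) :
    popLoss pmaj vC vS w = (1/2) * (J vC vS w 1 1 + J vC vS w (-1) (-1)
      + J vC vS w 1 (-1) + J vC vS w (-1) 1) := by
  have hp2 : (0:ℝ) < 1 - pmaj := by linarith
  have hw : ∀ (y a p : ℝ), Integrable (lossRW pmaj w)
      (ENNReal.ofReal (p / 2) • grpMeasure vC vS y a) :=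
    fun y a p => (integrable_lossRW_grp pmaj w vC vS y a).smul_measure ENNReal.ofReal_ne_top
  have e1 : ∀ (y a : ℝ) (p : ℝ), 0 ≤ p →
      ∫ ω, lossRW pmaj w ω ∂(ENNReal.ofReal (p / 2) • grpMeasure vC vS y a)
        = (p / 2) * ((if a = y then 1 / pmaj else 1 / (1 - pmaj)) * J vC vS w y a) := by
    intro y a p hp
    rw [integral_smul_measure, ENNReal.toReal_ofReal (by positivity), smul_eq_mul,
      integral_lossRW_grp]
  rw [popLoss, jointMeasure]
  rw [integral_add_measure ?_ ?_, integral_add_measure ?_ ?_, integral_add_measure ?_ ?_]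
  · rw [e1 1 1 pmaj hp0.le, e1 (-1) (-1) pmaj hp0.le, e1 1 (-1) (1 - pmaj) hp2.le,
      e1 (-1) 1 (1 - pmaj) hp2.le]
    norm_num
    field_simp
  · exact hw 1 1 pmaj
  · exact hw (-1) (-1) pmaj
  · exact (hw 1 1 pmaj).add_measure (hw (-1) (-1) pmaj)
  · exact hw 1 (-1) (1 - pmaj)
  · exact ((hw 1 1 pmaj).add_measure (hw (-1) (-1) pmaj)).add_measure (hw 1 (-1) (1 - pmaj))
  · exact hw (-1) 1 (1 - pmaj)


lemma gauss_neg_map (m : ℝ) (v : ℝ≥0) :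
    Measure.map (fun x : ℝ => -x) (gaussianReal m v) = gaussianReal (-m) v := by
  have h := gaussianReal_map_const_mul (μ := m) (v := v) (-1)
  have h2 : (NNReal.mk ((-1:ℝ)^2) (sq_nonneg _)) = 1 := by ext; norm_num
  rw [h2, one_mul] at h
  have h3 : (fun x : ℝ => (-1) * x) = fun x : ℝ => -x := by funext x; ring
  rw [show ((-1:ℝ) * m) = -m by ring] at h
  rw [← h]
  congr 1
  funext x
  ring

lemma integral_gauss_neg (m : ℝ) (v : ℝ≥0) {f : ℝ → ℝ} (hf : Measurable f) :
    ∫ u, f u ∂(gaussianReal (-m) v) = ∫ u, f (-u) ∂(gaussianReal m v) := by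
  rw [← gauss_neg_map, integral_map measurable_neg.aemeasurable hf.aestronglyMeasurable]

lemma measurable_logexp1 (b1 b2 : ℝ) :
    Measurable (fun u : ℝ => Real.log (1 + Real.exp (b1 * u + b2))) := by
  apply Measurable.log
  apply Measurable.const_add
  exact ((measurable_id.const_mul b1).add_const b2).exp

lemma J_core_pos (vC vS : ℝ≥0) (t a : ℝ) :
    J vC vS (t, 0) 1 a = ∫ u, Real.log (1 + Real.exp (-u * t + 0)) ∂(gaussianReal 1 vC) := by
  rw [J]
  have h1 : (fun x : ℝ × ℝ => Real.log (1 + Real.exp (-(1:ℝ)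
        * ((t, (0:ℝ)).1 * x.1 + (t, (0:ℝ)).2 * x.2))))
      = fun x : ℝ × ℝ => Real.log (1 + Real.exp (-x.1 * t + 0)) := by
    funext x
    have : -(1:ℝ) * ((t, (0:ℝ)).1 * x.1 + (t, (0:ℝ)).2 * x.2) = -x.1 * t + 0 := by
      simp; ring
    rw [this]
  rw [h1]
  exact integral_comp_fst (f := fun u => Real.log (1 + Real.exp (-u * t + 0)))
    (by apply Measurable.log; apply Measurable.const_add
        exact ((measurable_id.neg.mul_const t).add_const 0).exp)

lemma J_core_neg (vC vS : ℝ≥0) (t a : ℝ) :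
    J vC vS (t, 0) (-1) a = ∫ u, Real.log (1 + Real.exp (-u * t + 0)) ∂(gaussianReal 1 vC) := by
  rw [J]
  have h1 : (fun x : ℝ × ℝ => Real.log (1 + Real.exp (-(-1:ℝ)
        * ((t, (0:ℝ)).1 * x.1 + (t, (0:ℝ)).2 * x.2))))
      = fun x : ℝ × ℝ => Real.log (1 + Real.exp (t * x.1 + 0)) := by
    funext x
    have : -(-1:ℝ) * ((t, (0:ℝ)).1 * x.1 + (t, (0:ℝ)).2 * x.2) = t * x.1 + 0 := by
      simp
    rw [this]
  rw [h1]
  rw [integral_comp_fst (f := fun u => Real.log (1 + Real.exp (t * u + 0)))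
    (by simpa [mul_comm] using measurable_logexp1 t 0)]
  rw [show ((-1:ℝ)) = -(1:ℝ) by norm_num,
    integral_gauss_neg 1 vC (measurable_logexp1 t 0)]
  congr 1
  funext u
  rw [show t * (-u) + 0 = -u * t + 0 by ring]

lemma popLoss_core (pmaj : ℝ) (hp0 : 0 < pmaj) (hp1 : pmaj < 1) (vC vS : ℝ≥0) (t : ℝ) :
    popLoss pmaj vC vS (t, 0)
      = 2 * ∫ u, Real.log (1 + Real.exp (-u * t + 0)) ∂(gaussianReal 1 vC) := by
  rw [popLoss_eq pmaj hp0 hp1 vC vS (t, 0), J_core_pos vC vS t 1, J_core_pos vC vS t (-1),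
    J_core_neg vC vS t 1, J_core_neg vC vS t (-1)]
  ring

lemma J_negt (vC vS : ℝ≥0) (cc t y a : ℝ) :
    J vC vS (cc, -t) y a = J vC vS (cc, t) y (-a) := by
  rw [J, J]
  rw [← gauss_neg_map a vS]
  have hprod : (gaussianReal y vC).prod (Measure.map (fun x : ℝ => -x) (gaussianReal a vS))
      = Measure.map (Prod.map id (fun x : ℝ => -x))
        ((gaussianReal y vC).prod (gaussianReal a vS)) := by
    conv_lhs => rw [← Measure.map_id (μ := gaussianReal y vC)]
    exact Measure.map_prod_map _ _ measurable_id measurable_neg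
  rw [hprod, integral_map (measurable_id.prodMap measurable_neg).aemeasurable
    ((measurable_logexp y cc t).aestronglyMeasurable)]
  congr 1
  funext x
  show Real.log (1 + Real.exp (-y * ((cc, -t).1 * x.1 + (cc, -t).2 * x.2)))
    = Real.log (1 + Real.exp (-y * ((cc, t).1 * (Prod.map id (fun x : ℝ => -x) x).1
        + (cc, t).2 * (Prod.map id (fun x : ℝ => -x) x).2)))
  have : -y * ((cc, -t).1 * x.1 + (cc, -t).2 * x.2)
      = -y * ((cc, t).1 * (Prod.map id (fun x : ℝ => -x) x).1
        + (cc, t).2 * (Prod.map id (fun x : ℝ => -x) x).2) := by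
    simp [Prod.map]
  rw [this]

lemma popLoss_spu_even (pmaj : ℝ) (hp0 : 0 < pmaj) (hp1 : pmaj < 1) (vC vS : ℝ≥0) (cc t : ℝ) :
    popLoss pmaj vC vS (cc, -t) = popLoss pmaj vC vS (cc, t) := by
  rw [popLoss_eq pmaj hp0 hp1 vC vS (cc, -t), popLoss_eq pmaj hp0 hp1 vC vS (cc, t)]
  rw [J_negt vC vS cc t 1 1, J_negt vC vS cc t (-1) (-1), J_negt vC vS cc t 1 (-1),
    J_negt vC vS cc t (-1) 1]
  norm_num
  ring

lemma J_spu (vC vS : ℝ≥0) (cc t y a : ℝ) :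
    J vC vS (cc, t) y a = ∫ x : ℝ × ℝ,
      Real.log (1 + Real.exp (-y * x.2 * t + -y * cc * x.1))
      ∂((gaussianReal y vC).prod (gaussianReal a vS)) := by
  rw [J]
  congr 1
  funext x
  have : -y * ((cc, t).1 * x.1 + (cc, t).2 * x.2) = -y * x.2 * t + -y * cc * x.1 := by
    simp; ring
  rw [this]

lemma hasDerivAt_J_spu (vC vS : ℝ≥0) (cc y a : ℝ) :
    ∃ d : ℝ, HasDerivAt (fun t => J vC vS (cc, t) y a) d 0 := by
  have hA : Integrable (fun x : ℝ × ℝ => -y * x.2)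
      ((gaussianReal y vC).prod (gaussianReal a vS)) :=
    (integrable_comp_snd (integrable_id_gaussianReal a vS)).const_mul (-y)
  have hB : Integrable (fun x : ℝ × ℝ => -y * cc * x.1)
      ((gaussianReal y vC).prod (gaussianReal a vS)) :=
    (integrable_comp_fst (integrable_id_gaussianReal y vC)).const_mul (-y * cc)
  have hAm : Measurable (fun x : ℝ × ℝ => -y * x.2) := measurable_snd.const_mul (-y)
  have hBm : Measurable (fun x : ℝ × ℝ => -y * cc * x.1) := measurable_fst.const_mul (-y * cc)
  have h := hasDerivAt_integral_logexp _ hA hB hAm hBm 0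
  have hfun : (fun t => J vC vS (cc, t) y a) = fun t => ∫ x : ℝ × ℝ,
      Real.log (1 + Real.exp (-y * x.2 * t + -y * cc * x.1))
      ∂((gaussianReal y vC).prod (gaussianReal a vS)) := funext fun t => J_spu vC vS cc t y a
  exact ⟨_, by rw [hfun]; exact h⟩

end PopAux

end PopAuxSection

/-- **The population minimizer of the reweighted logistic loss uses only the core feature
(Proposition 3).** For any `p_maj ∈ (0,1)`, `σ_core² > 0` and `σ_spu² ≥ 0`, the population
reweighted logistic loss has vanishing gradient at `w* = (2/σ_core², 0)`: both partial
derivatives are zero there. -/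
theorem population_minimizer_uses_core_feature
    (pmaj : ℝ) (hp0 : 0 < pmaj) (hp1 : pmaj < 1)
    (vCore vSpu : ℝ≥0) (hvCore : 0 < (vCore : ℝ)) :
    HasDerivAt (fun t : ℝ => popLoss pmaj vCore vSpu (t, 0)) 0 (2 / (vCore : ℝ)) ∧
    HasDerivAt (fun t : ℝ => popLoss pmaj vCore vSpu (2 / (vCore : ℝ), t)) 0 0 := by
  have hv : vCore ≠ 0 := by
    intro h; rw [h] at hvCore; simp at hvCore
  constructor
  · -- core direction
    have hfun : (fun t : ℝ => popLoss pmaj vCore vSpu (t, 0))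
        = fun t => 2 * ∫ u, Real.log (1 + Real.exp (-u * t + 0)) ∂(gaussianReal 1 vCore) :=
      funext fun t => PopAux.popLoss_core pmaj hp0 hp1 vCore vSpu t
    rw [hfun]
    have hA : Integrable (fun u : ℝ => -u) (gaussianReal 1 vCore) :=
      (PopAux.integrable_id_gaussianReal 1 vCore).neg
    have hD := PopAux.hasDerivAt_integral_logexp (gaussianReal 1 vCore) hA
      (integrable_const 0) measurable_id.neg measurable_const (2 / (vCore : ℝ))
    rw [PopAux.core_integral_zero vCore hv] at hD
    simpa using hD.const_mul 2
  · -- spurious direction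
    obtain ⟨d1, h1⟩ := PopAux.hasDerivAt_J_spu vCore vSpu (2 / (vCore : ℝ)) 1 1
    obtain ⟨d2, h2⟩ := PopAux.hasDerivAt_J_spu vCore vSpu (2 / (vCore : ℝ)) (-1) (-1)
    obtain ⟨d3, h3⟩ := PopAux.hasDerivAt_J_spu vCore vSpu (2 / (vCore : ℝ)) 1 (-1)
    obtain ⟨d4, h4⟩ := PopAux.hasDerivAt_J_spu vCore vSpu (2 / (vCore : ℝ)) (-1) 1
    have hfun : (fun t : ℝ => popLoss pmaj vCore vSpu (2 / (vCore : ℝ), t))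
        = fun t => (1/2) * (PopAux.J vCore vSpu (2 / (vCore : ℝ), t) 1 1
            + PopAux.J vCore vSpu (2 / (vCore : ℝ), t) (-1) (-1)
            + PopAux.J vCore vSpu (2 / (vCore : ℝ), t) 1 (-1)
            + PopAux.J vCore vSpu (2 / (vCore : ℝ), t) (-1) 1) :=
      funext fun t => PopAux.popLoss_eq pmaj hp0 hp1 vCore vSpu (2 / (vCore : ℝ), t)
    have hP : HasDerivAt (fun t : ℝ => popLoss pmaj vCore vSpu (2 / (vCore : ℝ), t))
        ((1/2) * (d1 + d2 + d3 + d4)) 0 := by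
      rw [hfun]
      exact (((h1.add h2).add h3).add h4).const_mul (1/2)
    have heven : (fun t : ℝ => popLoss pmaj vCore vSpu (2 / (vCore : ℝ), -t))
        = fun t : ℝ => popLoss pmaj vCore vSpu (2 / (vCore : ℝ), t) :=
      funext fun t => PopAux.popLoss_spu_even pmaj hp0 hp1 vCore vSpu _ t
    have hP0 : HasDerivAt (fun t : ℝ => popLoss pmaj vCore vSpu (2 / (vCore : ℝ), t))
        ((1/2) * (d1 + d2 + d3 + d4)) (-0) := by rwa [neg_zero]
    have hQ : HasDerivAt (fun t : ℝ => popLoss pmaj vCore vSpu (2 / (vCore : ℝ), t))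
        ((1/2) * (d1 + d2 + d3 + d4) * -1) 0 := by
      rw [← heven]
      exact hP0.comp 0 (hasDerivAt_neg 0)
    have hDeq : (1/2) * (d1 + d2 + d3 + d4) = (1/2) * (d1 + d2 + d3 + d4) * -1 :=
      hP.unique hQ
    have hD0 : (1/2) * (d1 + d2 + d3 + d4) = 0 := by linarith
    rwa [hD0] at hP
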